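/- Let P be a finite point set in a metric space, r > 0, and ε > 0. Any (2+ε)r-net of P contains at most half of the points of P whose nearest-neighbor distance in P is at most r. -/

import Mathlib

/-- Any `(2+ε)r`-net `C` of a finite point set `P` contains at most half of the points of
`Close(P,r) = {p ∈ P : dd(p,P) ≤ r}`, the points whose nearest-neighbor distance in `P`
is at most `r`. -/
theorem stmt5 {X : Type*} [MetricSpace X] (P : Set X) (hfin : P.Finite)
    (C : Set X) (r ε : ℝ) (hr : 0 < r) (hε : 0 < ε)
    (hCP : C ⊆ P)
    (hsep : ∀ p ∈ C, ∀ q ∈ C, p ≠ q → (2 + ε) * r ≤ dist p q)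
    (hcov : ∀ p ∈ P, ∃ q ∈ C, dist p q < (2 + ε) * r) :
    2 * (C ∩ {p ∈ P | ∃ q ∈ P, q ≠ p ∧ dist p q ≤ r}).ncard ≤
      ({p ∈ P | ∃ q ∈ P, q ≠ p ∧ dist p q ≤ r}).ncard := by
  classical
  set S := {p ∈ P | ∃ q ∈ P, q ≠ p ∧ dist p q ≤ r} with hSdef
  have hSsub : S ⊆ P := fun x hx => hx.1
  have hSfin : S.Finite := hfin.subset hSsub
  have h2r : 2 * r < (2 + ε) * r := by nlinarith
  have key : ∀ c ∈ C ∩ S, ∃ q, q ∈ S \ C ∧ dist c q ≤ r := by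
    rintro c ⟨hcC, hcP, q, hqP, hqc, hdist⟩
    have hqnC : q ∉ C := by
      intro hqC
      have := hsep c hcC q hqC (Ne.symm hqc)
      have : dist c q < (2 + ε) * r := lt_of_le_of_lt hdist (by nlinarith)
      linarith [hsep c hcC q hqC (Ne.symm hqc)]
    exact ⟨q, ⟨⟨hqP, c, hCP hcC, Ne.symm hqc, by rwa [dist_comm]⟩, hqnC⟩, hdist⟩
  set f : X → X := fun c => if h : c ∈ C ∩ S then (key c h).choose else c with hf
  have hmaps : ∀ c ∈ C ∩ S, f c ∈ S \ C := by
    intro c hc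
    simp only [hf, dif_pos hc]
    exact (key c hc).choose_spec.1
  have hdistf : ∀ c ∈ C ∩ S, dist c (f c) ≤ r := by
    intro c hc
    simp only [hf, dif_pos hc]
    exact (key c hc).choose_spec.2
  have hinj : Set.InjOn f (C ∩ S) := by
    intro c1 h1 c2 h2 heq
    by_contra hne
    have hsep' := hsep c1 h1.1 c2 h2.1 hne
    have d1 := hdistf c1 h1
    have d2 := hdistf c2 h2
    rw [heq] at d1
    have : dist c1 c2 ≤ 2 * r := by
      calc dist c1 c2 ≤ dist c1 (f c2) + dist (f c2) c2 := dist_triangle _ _ _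
        _ ≤ r + r := by rw [dist_comm (f c2) c2]; linarith
        _ = 2 * r := by ring
    linarith
  have hcard : (C ∩ S).ncard ≤ (S \ C).ncard :=
    Set.ncard_le_ncard_of_injOn f hmaps hinj hSfin.diff
  have hdisj : Disjoint (C ∩ S) (S \ C) := by
    rw [Set.disjoint_left]; rintro x ⟨hxC, _⟩ ⟨_, hxnC⟩; exact hxnC hxC
  have hunion : (C ∩ S) ∪ (S \ C) ⊆ S := by
    rintro x (⟨_, hx⟩ | ⟨hx, _⟩) <;> exact hx
  have := Set.ncard_union_eq hdisj (hSfin.subset Set.inter_subset_right) hSfin.diff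
  have hle := Set.ncard_le_ncard hunion hSfin
  rw [this] at hle
  linarith
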